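/- Let V be a 4-dimensional real vector space, t : V → ℝ a nonzero linear functional, and h : (V →ₗ ℝ) → V a linear map such that t(h(α)) = 0 for every covector α and such that the range of h is 3-dimensional. If κ : V × V → ℝ is an alternating bilinear form with κ(h(α), h(β)) = 0 for all covectors α, β, then there exists a linear functional σ : V → ℝ such that κ(u,v) = t(u)·σ(v) − σ(u)·t(v) for all u, v ∈ V. -/

import Mathlib

/-- On a 4-dimensional real vector space with temporal functional `t`
and spatial metric `h : V* → V` (with `t ∘ h = 0` and rank 3), an antisymmetric
bilinear form `κ` whose "index-raised" version `κ(h α, h β)` vanishes must have the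
form `κ(u,v) = t(u)·σ(v) − σ(u)·t(v)`. -/
theorem maxwell_huygens_stmt1
    (V : Type*) [AddCommGroup V] [Module ℝ V] [FiniteDimensional ℝ V]
    (hdim : Module.finrank ℝ V = 4)
    (t : V →ₗ[ℝ] ℝ) (ht : t ≠ 0)
    (h : (V →ₗ[ℝ] ℝ) →ₗ[ℝ] V)
    (hth : ∀ α : V →ₗ[ℝ] ℝ, t (h α) = 0)
    (hrank : Module.finrank ℝ (LinearMap.range h) = 3)
    (κ : V →ₗ[ℝ] V →ₗ[ℝ] ℝ)
    (hanti : ∀ u v : V, κ u v = - κ v u)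
    (hraised : ∀ α β : V →ₗ[ℝ] ℝ, κ (h α) (h β) = 0) :
    ∃ σ : V →ₗ[ℝ] ℝ, ∀ u v : V, κ u v = t u * σ v - σ u * t v := by
  -- range h ≤ ker t
  have hle : LinearMap.range h ≤ LinearMap.ker t := by
    rintro x ⟨α, rfl⟩; exact hth α
  -- t is surjective
  have hsurj : LinearMap.range t = ⊤ := by
    have hv : ∃ v, t v ≠ 0 := by
      by_contra hc; push_neg at hc
      exact ht (by ext v; simp [hc v])
    rcases hv with ⟨v, hv⟩
    rw [LinearMap.range_eq_top]
    intro c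
    exact ⟨(c / t v) • v, by rw [map_smul, smul_eq_mul]; field_simp⟩
  have hkerdim : Module.finrank ℝ (LinearMap.ker t) = 3 := by
    have := LinearMap.finrank_range_add_finrank_ker t
    have h1 : Module.finrank ℝ (LinearMap.range t) = 1 := by
      rw [hsurj]; rw [finrank_top]; exact Module.finrank_self ℝ
    rw [h1, hdim] at this
    omega
  have heq : LinearMap.range h = LinearMap.ker t :=
    Submodule.eq_of_le_of_finrank_eq hle (by rw [hrank, hkerdim])
  -- κ vanishes on ker t × ker t
  have hker : ∀ u v : V, t u = 0 → t v = 0 → κ u v = 0 := by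
    intro u v hu hv
    have hu' : u ∈ LinearMap.range h := heq ▸ (LinearMap.mem_ker.mpr hu)
    have hv' : v ∈ LinearMap.range h := heq ▸ (LinearMap.mem_ker.mpr hv)
    rcases hu' with ⟨α, rfl⟩; rcases hv' with ⟨β, rfl⟩
    exact hraised α β
  -- pick w with t w = 1
  have : ∃ w : V, t w = 1 := by
    have hv : ∃ v, t v ≠ 0 := by
      by_contra hc; push_neg at hc
      exact ht (by ext v; simp [hc v])
    rcases hv with ⟨v, hv⟩
    exact ⟨(t v)⁻¹ • v, by simp [inv_mul_cancel₀ hv]⟩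
  rcases this with ⟨w, hw⟩
  refine ⟨κ w, fun u v => ?_⟩
  have hu : t (u - t u • w) = 0 := by simp [hw]
  have hv : t (v - t v • w) = 0 := by simp [hw]
  have hz := hker _ _ hu hv
  have hww : κ w w = 0 := by have := hanti w w; linarith
  have huw : κ u w = - κ w u := hanti u w
  simp only [map_sub, map_smul, LinearMap.sub_apply, LinearMap.smul_apply,
    smul_eq_mul] at hz
  rw [huw, hww] at hz
  ring_nf at hz ⊢
  linarith
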